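/- Let ε > 0 and let f : ℝ → ℝ be a function satisfying |f(x + y) − f(x) − f(y)| ≤ ε for all x, y ∈ ℝ, and such that the mapping x ↦ f(sin(x)) − cos(x)·f(x) is locally bounded on ℝ. Then there exist a real number λ and a real derivation χ : ℝ → ℝ such that |f(x) − (χ(x) + λ·x)| ≤ ε for all x ∈ ℝ. -/

import Mathlib

open Real Set

/-- A function `φ` is locally bounded on a set `s` if every point of `s` has a
neighborhood (within `s`) on which `φ` is bounded. -/
def LocallyBoundedOn (φ : ℝ → ℝ) (s : Set ℝ) : Prop :=
  ∀ x ∈ s, ∃ C : ℝ, ∀ᶠ y in nhdsWithin x s, |φ y| ≤ C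

/-- A real-valued function is *regular* on its domain `s` if it is locally bounded,
or continuous, or Lebesgue measurable on `s`. -/
def RegularOn (φ : ℝ → ℝ) (s : Set ℝ) : Prop :=
  LocallyBoundedOn φ s ∨ ContinuousOn φ s ∨ Measurable (s.restrict φ)

/-- A real derivation: an additive function satisfying the Leibniz rule. -/
def IsRealDerivation (χ : ℝ → ℝ) : Prop :=
  (∀ x y : ℝ, χ (x + y) = χ x + χ y) ∧ (∀ x y : ℝ, χ (x * y) = x * χ y + y * χ x)


open Filter


/-- An additive function vanishing at 1 and bounded on [0,1] is zero. -/
lemma additive_zero_of_bounded (h : ℝ → ℝ) (hadd : ∀ x y, h (x + y) = h x + h y)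
    (h1 : h 1 = 0) (C : ℝ) (hC : ∀ t ∈ Icc (0:ℝ) 1, |h t| ≤ C) : ∀ x, h x = 0 := by
  set φ : ℝ →+ ℝ := AddMonoidHom.mk' h hadd with hφ
  have hq : ∀ q : ℚ, h (q : ℝ) = 0 := by
    intro q
    have : h ((q : ℝ) * 1) = q * h 1 := by
      have := map_rat_smul φ.toRatLinearMap q (1 : ℝ)
      simpa [Rat.smul_def, φ] using this
    simpa [h1] using this
  have hglob : ∀ x, |h x| ≤ C := by
    intro x
    obtain ⟨q, hq1, hq2⟩ := exists_rat_btwn (show -x < 1 - x by linarith)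
    have hmem : x + q ∈ Icc (0:ℝ) 1 := ⟨by linarith, by linarith⟩
    have : h (x + q) = h x := by rw [hadd, hq, add_zero]
    have := hC _ hmem
    rwa [‹h (x + q) = h x›] at this
  intro x
  by_contra hx
  have hpos : 0 < |h x| := abs_pos.mpr hx
  obtain ⟨n, hn⟩ := exists_nat_gt (C / |h x|)
  have hn' : C < n * |h x| := by
    rw [div_lt_iff₀ hpos] at hn; linarith
  have hsm : h ((n : ℝ) * x) = n * h x := by
    have := AddMonoidHom.map_nsmul φ n x
    simpa [φ, nsmul_eq_mul] using this
  have := hglob ((n : ℝ) * x)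
  rw [hsm, abs_mul, abs_of_nonneg (by positivity : (0:ℝ) ≤ (n:ℝ))] at this
  linarith


lemma half_pow_mul (n : ℕ) : ((1:ℝ)/2)^n * 2^n = 1 := by
  rw [← mul_pow]; norm_num

lemma hyers (ε : ℝ) (hε : 0 < ε) (f : ℝ → ℝ)
    (hf : ∀ x y : ℝ, |f (x + y) - f x - f y| ≤ ε) :
    ∃ g : ℝ → ℝ, (∀ x y, g (x + y) = g x + g y) ∧ ∀ x, |f x - g x| ≤ ε := by
  set u : ℝ → ℕ → ℝ := fun x n => f (2 ^ n * x) / 2 ^ n with hu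
  have hdist : ∀ x n, dist (u x n) (u x (n + 1)) ≤ (ε / 2) * (1 / 2) ^ n := by
    intro x n
    have h2 : (0:ℝ) < 2 ^ n := by positivity
    have key := hf (2 ^ n * x) (2 ^ n * x)
    have e1 : 2 ^ n * x + 2 ^ n * x = 2 ^ (n + 1) * x := by ring
    rw [e1] at key
    rw [Real.dist_eq, hu]
    have e2 : f (2 ^ n * x) / 2 ^ n - f (2 ^ (n + 1) * x) / 2 ^ (n + 1)
        = -(f (2 ^ (n+1) * x) - f (2 ^ n * x) - f (2 ^ n * x)) / 2 ^ (n+1) := by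
      field_simp; ring
    rw [e2, abs_div, abs_neg, abs_of_nonneg (by positivity : (0:ℝ) ≤ (2:ℝ) ^ (n+1))]
    rw [div_le_iff₀ (by positivity)]
    calc |f (2 ^ (n+1) * x) - f (2 ^ n * x) - f (2 ^ n * x)| ≤ ε := key
      _ = ε / 2 * (1 / 2) ^ n * 2 ^ (n + 1) := by
          rw [pow_succ]; linear_combination (-ε) * half_pow_mul n
  have hcauchy : ∀ x, CauchySeq (u x) := fun x =>
    cauchySeq_of_le_geometric (1/2) (ε/2) (by norm_num) (hdist x)
  set g : ℝ → ℝ := fun x => limUnder atTop (u x) with hg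
  have htend : ∀ x, Tendsto (u x) atTop (nhds (g x)) := fun x => (hcauchy x).tendsto_limUnder
  refine ⟨g, ?_, ?_⟩
  · intro x y
    have hzero : Tendsto (fun n => u (x + y) n - u x n - u y n) atTop (nhds 0) := by
      apply squeeze_zero_norm (a := fun n : ℕ => ε * (1/2)^n)
      · intro n
        show |u (x + y) n - u x n - u y n| ≤ ε * (1/2)^n
        have h2 : (0:ℝ) < 2 ^ n := by positivity
        have key := hf (2 ^ n * x) (2 ^ n * y)
        have e1 : 2 ^ n * x + 2 ^ n * y = 2 ^ n * (x + y) := by ring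
        rw [e1] at key
        have e2 : u (x+y) n - u x n - u y n
            = (f (2 ^ n * (x+y)) - f (2 ^ n * x) - f (2 ^ n * y)) / 2 ^ n := by
          simp only [hu]; ring
        rw [e2, abs_div, abs_of_nonneg h2.le, div_le_iff₀ h2]
        calc |f (2 ^ n * (x+y)) - f (2 ^ n * x) - f (2 ^ n * y)| ≤ ε := key
          _ = ε * (1/2)^n * 2^n := by linear_combination (-ε) * half_pow_mul n
      · have : Tendsto (fun n : ℕ => (1/2 : ℝ)^n) atTop (nhds 0) :=
          tendsto_pow_atTop_nhds_zero_of_lt_one (by norm_num) (by norm_num)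
        simpa using this.const_mul ε
    have hlim : Tendsto (fun n => u (x + y) n - u x n - u y n) atTop
        (nhds (g (x+y) - g x - g y)) := ((htend (x+y)).sub (htend x)).sub (htend y)
    have := tendsto_nhds_unique hlim hzero
    linarith
  · intro x
    have h0 : u x 0 = f x := by simp [hu]
    have := dist_le_of_le_geometric_of_tendsto₀ (1/2) (ε/2) (by norm_num) (hdist x) (htend x)
    rw [h0, Real.dist_eq] at this
    calc |f x - g x| ≤ ε / 2 / (1 - 1/2) := this
      _ = ε := by ring_nf


lemma bdd_on_compact (φ : ℝ → ℝ) (h : ∀ x : ℝ, ∃ C : ℝ, ∀ᶠ y in nhds x, |φ y| ≤ C)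
    (K : Set ℝ) (hK : IsCompact K) : ∃ C : ℝ, ∀ y ∈ K, |φ y| ≤ C := by
  choose C hC using h
  have hU : ∀ x (_ : x ∈ K), {y : ℝ | |φ y| ≤ C x} ∈ nhds x := fun x _ => hC x
  obtain ⟨t, ht⟩ := hK.elim_nhds_subcover' (fun x _ => {y : ℝ | |φ y| ≤ C x}) hU
  refine ⟨∑ x ∈ t, |C x.1|, fun y hy => ?_⟩
  obtain ⟨x, hxt, hyx⟩ := by
    simpa only [mem_iUnion, exists_prop] using ht hy
  calc |φ y| ≤ C x.1 := hyx
    _ ≤ |C x.1| := le_abs_self _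
    _ ≤ ∑ z ∈ t, |C z.1| := Finset.single_le_sum (f := fun z : K => |C z.1|) (fun z _ => abs_nonneg _) hxt

theorem stmt_14 (ε : ℝ) (hε : 0 < ε) (f : ℝ → ℝ)
    (hf : ∀ x y : ℝ, |f (x + y) - f x - f y| ≤ ε)
    (hlb : LocallyBoundedOn (fun x : ℝ => f (Real.sin x) - Real.cos x * f x) Set.univ) :
    ∃ (l : ℝ) (χ : ℝ → ℝ), IsRealDerivation χ ∧
      ∀ x : ℝ, |f x - (χ x + l * x)| ≤ ε := by
  obtain ⟨g, hgadd, hgf⟩ := hyers ε hε f hf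
  have hg0 : g 0 = 0 := by
    have := hgadd 0 0; simp at this; linarith
  have hgneg : ∀ a, g (-a) = -g a := by
    intro a; have := hgadd a (-a); simp [hg0] at this; linarith
  have hgsub : ∀ a b, g (a - b) = g a - g b := by
    intro a b; rw [sub_eq_add_neg, hgadd, hgneg]; ring
  set B : ℝ → ℝ := fun x => g (Real.sin x) - Real.cos x * g x with hB
  -- local boundedness of B
  have hBlb : ∀ x : ℝ, ∃ C : ℝ, ∀ᶠ y in nhds x, |B y| ≤ C := by
    intro x
    obtain ⟨C, hC⟩ := hlb x (mem_univ x)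
    rw [nhdsWithin_univ] at hC
    refine ⟨C + 2 * ε, hC.mono fun y hy => ?_⟩
    simp only at hy
    have h1 := hgf (Real.sin y)
    have h2 := hgf y
    have hcos := Real.abs_cos_le_one y
    have e : B y = (f (Real.sin y) - Real.cos y * f y)
        - ((f (Real.sin y) - g (Real.sin y)) - Real.cos y * (f y - g y)) := by
      rw [hB]; ring
    rw [e]
    calc |(f (Real.sin y) - Real.cos y * f y)
        - ((f (Real.sin y) - g (Real.sin y)) - Real.cos y * (f y - g y))|
        ≤ |f (Real.sin y) - Real.cos y * f y|
          + |(f (Real.sin y) - g (Real.sin y)) - Real.cos y * (f y - g y)| := abs_sub _ _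
      _ ≤ C + (|f (Real.sin y) - g (Real.sin y)| + |Real.cos y * (f y - g y)|) :=
          add_le_add hy (abs_sub _ _)
      _ ≤ C + (ε + 1 * ε) := by
          refine add_le_add (le_refl C) (add_le_add h1 ?_)
          rw [abs_mul]
          exact mul_le_mul hcos h2 (abs_nonneg _) zero_le_one
      _ = C + 2 * ε := by ring
  set G : ℝ → ℝ → ℝ := fun u v => g (u * v) - u * g v - v * g u with hG
  -- the key identity
  have hident : ∀ x y : ℝ, G (Real.sin x) (Real.cos y) =
      (B (x + y) + B (x - y) - 2 * Real.cos y * B x) / 2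
        - Real.sin x * (g (Real.cos y) + Real.sin y * g y) := by
    intro x y
    have e1 : g (Real.sin x * Real.cos y + Real.cos x * Real.sin y)
        = g (Real.sin x * Real.cos y) + g (Real.cos x * Real.sin y) := hgadd _ _
    have e2 : g (Real.sin x * Real.cos y - Real.cos x * Real.sin y)
        = g (Real.sin x * Real.cos y) - g (Real.cos x * Real.sin y) := hgsub _ _
    have e3 : g (x + y) = g x + g y := hgadd _ _
    have e4 : g (x - y) = g x - g y := hgsub _ _
    rw [hG, hB]
    simp only [Real.sin_add, Real.sin_sub, Real.cos_add, Real.cos_sub, e1, e2, e3, e4]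
    ring
  -- step 1 : G t v = -(g 1) * t * v for v ∈ [-1, 1]
  have key1 : ∀ v ∈ Icc (-1:ℝ) 1, ∀ t : ℝ, G t v = -(g 1) * t * v := by
    intro v hv
    set y := Real.arccos v with hy
    have hcos : Real.cos y = v := Real.cos_arccos hv.1 hv.2
    obtain ⟨M, hM⟩ := bdd_on_compact B hBlb (Icc (-(|y| + 2)) (|y| + 2)) isCompact_Icc
    set Bt : ℝ := g (Real.cos y) + Real.sin y * g y with hBt
    have hpi : Real.pi / 2 ≤ 2 := by
      have := Real.pi_le_four; linarith
    have hbound : ∀ t ∈ Icc (0:ℝ) 1, |G t v| ≤ 2 * M + |Bt| := by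
      intro t ht
      have hsurj : Icc (Real.sin 0) (Real.sin (Real.pi / 2))
          ⊆ Real.sin '' Icc 0 (Real.pi / 2) :=
        intermediate_value_Icc (by positivity) Real.continuous_sin.continuousOn
      have ht' : t ∈ Icc (Real.sin 0) (Real.sin (Real.pi / 2)) := by
        rw [Real.sin_zero, Real.sin_pi_div_two]; exact ht
      obtain ⟨x, hx, hsin⟩ := hsurj ht'
      have hy1 : -|y| ≤ y := neg_abs_le y
      have hy2 : y ≤ |y| := le_abs_self y
      have hx1 : 0 ≤ x := hx.1
      have hx2 : x ≤ 2 := hx.2.trans hpi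
      have m1 : x + y ∈ Icc (-(|y| + 2)) (|y| + 2) := ⟨by linarith, by linarith⟩
      have m2 : x - y ∈ Icc (-(|y| + 2)) (|y| + 2) := ⟨by linarith, by linarith⟩
      have m3 : x ∈ Icc (-(|y| + 2)) (|y| + 2) := ⟨by linarith, by linarith⟩
      have b1 := hM _ m1
      have b2 := hM _ m2
      have b3 := hM _ m3
      have hM0 : 0 ≤ M := (abs_nonneg _).trans b3
      have hsx := Real.abs_sin_le_one x
      have hcy : |Real.cos y| ≤ 1 := Real.abs_cos_le_one y
      rw [← hsin, ← hcos, hident x y]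
      calc |(B (x + y) + B (x - y) - 2 * Real.cos y * B x) / 2 - Real.sin x * Bt|
          ≤ |(B (x + y) + B (x - y) - 2 * Real.cos y * B x) / 2| + |Real.sin x * Bt| :=
            abs_sub _ _
        _ ≤ (|B (x + y) + B (x - y)| + |2 * Real.cos y * B x|) / 2 + |Real.sin x| * |Bt| := by
            rw [abs_div, abs_mul]
            have : |B (x + y) + B (x - y) - 2 * Real.cos y * B x|
                ≤ |B (x + y) + B (x - y)| + |2 * Real.cos y * B x| := abs_sub _ _
            have h2 : |(2:ℝ)| = 2 := by norm_num
            rw [h2]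
            gcongr
        _ ≤ 2 * M + |Bt| := by
            have e5 : |2 * Real.cos y * B x| = 2 * |Real.cos y| * |B x| := by
              rw [abs_mul, abs_mul]; norm_num
            have e6 : |B (x + y) + B (x - y)| ≤ M + M :=
              (abs_add_le _ _).trans (add_le_add b1 b2)
            have e7 : 2 * |Real.cos y| * |B x| ≤ 2 * M := by
              nlinarith [abs_nonneg (B x), abs_nonneg (Real.cos y)]
            have e9 : |Real.sin x| * |Bt| ≤ 1 * |Bt| :=
              mul_le_mul_of_nonneg_right hsx (abs_nonneg _)
            rw [e5]
            linarith
    -- plug into the additive-bounded lemma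
    intro t
    have hzero := additive_zero_of_bounded (fun t => G t v + g 1 * t * v)
      (fun a b => by simp only [hG]; ring_nf; rw [hgadd (a*v) (b*v), hgadd a b]; ring)
      (by simp only [hG]; rw [one_mul]; ring)
      (2 * M + |Bt| + |g 1 * v|)
      (fun s hs => by
        have h1 := hbound s hs
        have h2 : |g 1 * s * v| ≤ |g 1 * v| := by
          have : |g 1 * s * v| = |g 1 * v| * |s| := by
            rw [abs_mul, abs_mul, abs_mul]; ring
          rw [this]
          calc |g 1 * v| * |s| ≤ |g 1 * v| * 1 := by
                apply mul_le_mul_of_nonneg_left _ (abs_nonneg _)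
                rw [abs_le]; exact ⟨by linarith [hs.1], hs.2⟩
            _ = |g 1 * v| := mul_one _
        calc |G s v + g 1 * s * v| ≤ |G s v| + |g 1 * s * v| := abs_add_le _ _
          _ ≤ 2 * M + |Bt| + |g 1 * v| := add_le_add h1 h2)
    have := hzero t
    linarith [this]
  -- step 2 : extend to all v
  have key2 : ∀ t v : ℝ, g (t * v) - t * g v - v * g t = -(g 1) * t * v := by
    have hGadd2 : ∀ u v v' : ℝ, G u (v + v') = G u v + G u v' := by
      intro u v v'
      simp only [hG]
      have : g (u * (v + v')) = g (u * v) + g (u * v') := by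
        rw [mul_add]; exact hgadd _ _
      rw [this, hgadd v v']; ring
    have hGnat : ∀ (n : ℕ) (u w : ℝ), G u ((n : ℝ) * w) = n * G u w := by
      intro n u w
      induction n with
      | zero => simp [hG, hg0]
      | succ k ih =>
          push_cast
          rw [add_mul, one_mul, hGadd2, ih]; ring
    intro t v
    obtain ⟨n, hn⟩ := exists_nat_ge |v|
    set m : ℝ := (n : ℝ) + 1 with hm
    have hm0 : (0:ℝ) < m := by positivity
    have hdivmem : v / m ∈ Icc (-1:ℝ) 1 := by
      rw [mem_Icc, ← abs_le, abs_div, abs_of_pos hm0, div_le_one hm0]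
      linarith [le_abs_self v, neg_abs_le v]
    have h1 := key1 (v / m) hdivmem t
    have h2 : G t v = m * G t (v / m) := by
      have : v = (((n + 1 : ℕ)) : ℝ) * (v / m) := by
        push_cast; rw [← hm]; field_simp
      calc G t v = G t ((((n + 1 : ℕ)) : ℝ) * (v / m)) := by rw [← this]
        _ = ((n + 1 : ℕ) : ℝ) * G t (v / m) := hGnat (n + 1) t (v / m)
        _ = m * G t (v / m) := by push_cast; rw [← hm]
    have h3 : G t v = -(g 1) * t * v := by
      rw [h2, h1]; field_simp
    simpa only [hG] using h3
  -- conclusion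
  refine ⟨g 1, fun x => g x - g 1 * x, ⟨fun a b => by
    show g (a + b) - g 1 * (a + b) = (g a - g 1 * a) + (g b - g 1 * b)
    rw [hgadd]; ring, fun a b => ?_⟩, fun x => ?_⟩
  · have := key2 a b
    show g (a * b) - g 1 * (a * b) = a * (g b - g 1 * b) + b * (g a - g 1 * a)
    linear_combination this
  · show |f x - (g x - g 1 * x + g 1 * x)| ≤ ε
    have := hgf x
    have e : f x - (g x - g 1 * x + g 1 * x) = f x - g x := by ring
    rw [e]
    exact this
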